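/- Let {H_x}_{x∈X} be a consistent selection of subgroups for the cocycle f. If for some point x ∈ X the T_f-orbit closure of (x, H_x) in X × G/H_x is compact, then for every y ∈ X the T_f-orbit closure of (y, H_y) in X × G/H_y is compact. -/

import Mathlib

open Topology Pointwise Set Filter

section Defs

variable {X : Type*} [TopologicalSpace X] {G : Type*} [TopologicalSpace G] [Group G]

/-- The positive-iterate part of the cocycle generated by `f` over `T`:
`f(n,x) = f(T^{n-1}x) ⋯ f(Tx) · f(x)` for `n ≥ 1` and `f(0,x) = e`. -/
def cocycleNat (T : X ≃ₜ X) (f : X → G) : ℕ → X → G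
  | 0, _ => 1
  | n + 1, x => f ((T.toEquiv ^ n) x) * cocycleNat T f n x

/-- The cocycle generated by `f` over `T`, at integer times:
`f(n,x)` as above for `n ≥ 0` and `f(n,x) = f(-n, T^n x)⁻¹` for `n < 0`. -/
def cocycle (T : X ≃ₜ X) (f : X → G) (n : ℤ) (x : X) : G :=
  if 0 ≤ n then cocycleNat T f n.toNat x
  else (cocycleNat T f (-n).toNat ((T.toEquiv ^ n) x))⁻¹

/-- The `n`-th power of the skew product `T_f` on `X × G`:
`T_f^n (x,g) = (T^n x, f(n,x)·g)`. -/
def skewPow (T : X ≃ₜ X) (f : X → G) (n : ℤ) (p : X × G) : X × G :=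
  ((T.toEquiv ^ n) p.1, cocycle T f n p.1 * p.2)

/-- The `n`-th power of the skew product `T_f` acting on `X × G/H`:
`T_f^n (x, gH) = (T^n x, f(n,x)·gH)`. -/
def skewPowQ (T : X ≃ₜ X) (f : X → G) (H : Subgroup G) (n : ℤ) (p : X × (G ⧸ H)) :
    X × (G ⧸ H) :=
  ((T.toEquiv ^ n) p.1, cocycle T f n p.1 • p.2)

/-- The local essential range `E_x(f)`: all `g ∈ G` such that for every open
neighbourhood `U` of `x` and every open neighbourhood `V` of the identity there are
`n ∈ ℤ` and `y ∈ U ∩ T⁻ⁿU` with `f(n,y) ∈ V·g`. -/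
def essRange (T : X ≃ₜ X) (f : X → G) (x : X) : Set G :=
  {g | ∀ U : Set X, IsOpen U → x ∈ U → ∀ V : Set G, IsOpen V → (1 : G) ∈ V →
    ∃ n : ℤ, ∃ y ∈ U, (T.toEquiv ^ n) y ∈ U ∧ ∃ v ∈ V, cocycle T f n y = v * g}

/-- `P_x(f)`: the vertical section at `x` of the closure of the `T_f`-orbit of `(x,e)`. -/
def Pset (T : X ≃ₜ X) (f : X → G) (x : X) : Set G :=
  {g | (x, g) ∈ closure (Set.range fun n : ℤ => skewPow T f n (x, 1))}

/-- `𝒟(f) = {x : E_x(f) = P_x(f)}`. -/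
def Dset (T : X ≃ₜ X) (f : X → G) : Set X :=
  {x | essRange T f x = Pset T f x}

/-- Topological recurrence of the cocycle generated by `f`: for every open
neighbourhood `V` of the identity of `G` and every nonempty open `U ⊆ X` there is
`n ≠ 0` with `T⁻ⁿU ∩ U ∩ {x : f(n,x) ∈ V} ≠ ∅`. -/
def IsRecurrentCocycle (T : X ≃ₜ X) (f : X → G) : Prop :=
  ∀ V : Set G, IsOpen V → (1 : G) ∈ V → ∀ U : Set X, IsOpen U → U.Nonempty →
    ∃ n : ℤ, n ≠ 0 ∧ ∃ x ∈ U, (T.toEquiv ^ n) x ∈ U ∧ cocycle T f n x ∈ V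

/-- Minimality of a homeomorphism: every orbit is dense. -/
def IsMinimal (T : X ≃ₜ X) : Prop :=
  ∀ x : X, Dense (Set.range fun n : ℤ => (T.toEquiv ^ n) x)

/-- A consistent selection of subgroups for the cocycle generated by `f`: a family of
closed subgroups `H x ⊆ E_x(f)` with `H (Tⁿx) = f(n,x)·(H x)·f(n,x)⁻¹` depending
continuously on `x` for the Fell topology. -/
structure IsConsistentSelection (T : X ≃ₜ X) (f : X → G) (H : X → Subgroup G) : Prop where
  isClosed : ∀ x : X, IsClosed (H x : Set G)
  subset_essRange : ∀ x : X, (H x : Set G) ⊆ essRange T f x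
  conj : ∀ (x : X) (n : ℤ), (H ((T.toEquiv ^ n) x) : Set G) =
    (fun h => cocycle T f n x * h * (cocycle T f n x)⁻¹) '' (H x : Set G)
  fell_compact : ∀ (x : X) (K : Set G), IsCompact K → K ∩ (H x : Set G) = ∅ →
    ∃ W ∈ 𝓝 x, ∀ y ∈ W, K ∩ (H y : Set G) = ∅
  fell_open : ∀ (x : X) (O : Set G), IsOpen O → (O ∩ (H x : Set G)).Nonempty →
    ∃ W ∈ 𝓝 x, ∀ y ∈ W, (O ∩ (H y : Set G)).Nonempty

/-- The `T_f`-orbit closure of a point of `X × G`. -/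
def orbitClosure (T : X ≃ₜ X) (f : X → G) (p : X × G) : Set (X × G) :=
  closure (Set.range fun n : ℤ => skewPow T f n p)

/-- For `C ⊆ X × G`, the set `H = {g : C·g⁻¹ = C}`, where `C·g = {(y, c·g) : (y,c) ∈ C}`. -/
def stabSet (C : Set (X × G)) : Set G :=
  {g : G | (fun p : X × G => (p.1, p.2 * g⁻¹)) '' C = C}

/-- A strongly regular orbit closure: a `T_f`-orbit closure which projects onto all
of `X` and all of whose vertical sections are single left cosets of
`H = {g : C·g⁻¹ = C}`. -/
def IsStronglyRegularOC (T : X ≃ₜ X) (f : X → G) (C : Set (X × G)) : Prop :=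
  (∃ p : X × G, C = orbitClosure T f p) ∧ Prod.fst '' C = Set.univ ∧
    ∀ x : X, ∃ gx : G, {g : G | (x, g) ∈ C} = {gx} * stabSet C

/-- A strongly regular cocycle: one whose skew product admits a strongly regular
orbit closure. -/
def IsStronglyRegularCocycle (T : X ≃ₜ X) (f : X → G) : Prop :=
  ∃ C : Set (X × G), IsStronglyRegularOC T f C

/-- A regular cocycle: some `T_f`-orbit closure projects onto all of `X`. -/
def IsRegularCocycle (T : X ≃ₜ X) (f : X → G) : Prop :=
  ∃ p : X × G, Prod.fst '' orbitClosure T f p = Set.univ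



set_option linter.unusedSectionVars false

section Helpers

variable {X : Type*} [TopologicalSpace X] {G : Type*} [TopologicalSpace G] [Group G]

lemma cocycleNat_add (T : X ≃ₜ X) (f : X → G) (a b : ℕ) (x : X) :
    cocycleNat T f (a + b) x = cocycleNat T f a ((T.toEquiv ^ b) x) * cocycleNat T f b x := by
  induction a with
  | zero => simp [cocycleNat]
  | succ a ih =>
      have : a + 1 + b = (a + b) + 1 := by omega
      rw [this]
      show f ((T.toEquiv ^ (a + b)) x) * cocycleNat T f (a + b) x = _
      rw [ih]
      show _ = (f ((T.toEquiv ^ a) ((T.toEquiv ^ b) x)) * cocycleNat T f a ((T.toEquiv ^ b) x)) *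
        cocycleNat T f b x
      rw [pow_add, Equiv.Perm.mul_apply, mul_assoc]

lemma cocycle_zero (T : X ≃ₜ X) (f : X → G) (x : X) : cocycle T f 0 x = 1 := by
  simp [cocycle, cocycleNat]

lemma cocycle_succ (T : X ≃ₜ X) (f : X → G) (n : ℤ) (x : X) :
    cocycle T f (n + 1) x = f ((T.toEquiv ^ n) x) * cocycle T f n x := by
  rcases le_or_gt 0 n with hn | hn
  · have h1 : (0:ℤ) ≤ n + 1 := by omega
    rw [cocycle, cocycle, if_pos h1, if_pos hn]
    have h2 : (n + 1).toNat = n.toNat + 1 := by omega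
    rw [h2]
    show f ((T.toEquiv ^ n.toNat) x) * cocycleNat T f n.toNat x = _
    congr 2
    rw [← zpow_natCast, Int.toNat_of_nonneg hn]
  · rcases eq_or_lt_of_le (by omega : n + 1 ≤ 0) with h0 | h0
    · have hn1 : n = -1 := by omega
      subst hn1
      rw [cocycle, cocycle, if_pos (by norm_num), if_neg (by norm_num)]
      norm_num
      show (1:G) = f ((T.toEquiv ^ (-1:ℤ)) x) *
        (f ((T.toEquiv ^ (0:ℕ)) ((T.toEquiv ^ (-1:ℤ)) x)) * 1)⁻¹
      simp
    · -- n + 1 < 0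
      have hn1 : ¬ (0:ℤ) ≤ n + 1 := by omega
      have hn2 : ¬ (0:ℤ) ≤ n := by omega
      rw [cocycle, cocycle, if_neg hn1, if_neg hn2]
      set y := (T.toEquiv ^ n) x with hy
      set z := (T.toEquiv ^ (n+1)) x with hz
      have hzy : z = T.toEquiv y := by
        rw [hy, hz, add_comm, zpow_add, zpow_one, Equiv.Perm.mul_apply]
      have hj : (-n).toNat = (-(n+1)).toNat + 1 := by omega
      rw [hj, cocycleNat_add T f _ 1]
      have h1 : cocycleNat T f 1 y = f y := by simp [cocycleNat]
      rw [h1]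
      have h2 : (T.toEquiv ^ (1:ℕ)) y = z := by rw [pow_one, hzy]
      rw [h2, mul_inv_rev, mul_inv_cancel_left]

lemma cocycle_pred (T : X ≃ₜ X) (f : X → G) (n : ℤ) (x : X) :
    cocycle T f (n - 1) x = (f ((T.toEquiv ^ (n-1)) x))⁻¹ * cocycle T f n x := by
  have := cocycle_succ T f (n - 1) x
  rw [sub_add_cancel] at this
  rw [this, inv_mul_cancel_left]

lemma cocycle_add (T : X ≃ₜ X) (f : X → G) (m n : ℤ) (x : X) :
    cocycle T f (m + n) x = cocycle T f m ((T.toEquiv ^ n) x) * cocycle T f n x := by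
  induction m using Int.induction_on with
  | zero => rw [zero_add, cocycle_zero, one_mul]
  | succ m ih =>
      have e1 : (m:ℤ) + 1 + n = (m + n) + 1 := by ring
      rw [e1, cocycle_succ, ih, cocycle_succ, ← mul_assoc]
      congr 3
      rw [zpow_add, Equiv.Perm.mul_apply]
  | pred m ih =>
      have e1 : (-(m:ℤ) - 1 + n) = (-m + n) - 1 := by ring
      rw [e1, cocycle_pred, ih, cocycle_pred, ← mul_assoc]
      congr 3
      have e2 : (-(m:ℤ) + n - 1) = (-m - 1) + n := by ring
      rw [e2, zpow_add, Equiv.Perm.mul_apply]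


lemma continuous_zpow_apply (T : X ≃ₜ X) (n : ℤ) :
    Continuous fun x : X => (T.toEquiv ^ n) x := by
  induction n using Int.induction_on with
  | zero => simpa using continuous_id'
  | succ m ih =>
      have : ∀ x : X, (T.toEquiv ^ ((m:ℤ) + 1)) x = (T.toEquiv ^ (m:ℤ)) (T x) := by
        intro x
        rw [zpow_add, zpow_one, Equiv.Perm.mul_apply]
        rfl
      simpa only [this] using ih.comp' T.continuous
  | pred m ih =>
      have : ∀ x : X, (T.toEquiv ^ (-(m:ℤ) - 1)) x = (T.toEquiv ^ (-(m:ℤ))) (T.symm x) := by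
        intro x
        rw [sub_eq_add_neg, zpow_add, Equiv.Perm.mul_apply, zpow_neg_one,
          Equiv.Perm.inv_def]
        rfl
      simpa only [this] using ih.comp' T.continuous_symm

variable [IsTopologicalGroup G]

lemma continuous_cocycleNat (T : X ≃ₜ X) {f : X → G} (hf : Continuous f) (k : ℕ) :
    Continuous fun x : X => cocycleNat T f k x := by
  induction k with
  | zero => simpa [cocycleNat] using continuous_const
  | succ k ih =>
      show Continuous fun x => f ((T.toEquiv ^ k) x) * cocycleNat T f k x
      have hc : Continuous fun x : X => (T.toEquiv ^ k) x := by
        simpa [zpow_natCast] using continuous_zpow_apply T (k : ℤ)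
      exact (hf.comp hc).mul ih

lemma continuous_cocycle (T : X ≃ₜ X) {f : X → G} (hf : Continuous f) (n : ℤ) :
    Continuous fun x : X => cocycle T f n x := by
  rcases le_or_gt 0 n with hn | hn
  · simp only [cocycle, if_pos hn]
    exact continuous_cocycleNat T hf _
  · simp only [cocycle, if_neg (not_le.mpr hn)]
    exact ((continuous_cocycleNat T hf _).comp (continuous_zpow_apply T n)).inv


lemma exists_compact_lift [IsTopologicalGroup G] [LocallyCompactSpace G] (H : Subgroup G) {Q : Set (G ⧸ H)}
    (hQ : IsCompact Q) : ∃ K : Set G, IsCompact K ∧ Q ⊆ QuotientGroup.mk '' K := by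
  have hsel : ∀ q : G ⧸ H, ∃ K : Set G, IsCompact K ∧
      (QuotientGroup.mk '' K : Set (G ⧸ H)) ∈ 𝓝 q := by
    intro q
    obtain ⟨g, hg⟩ := QuotientGroup.mk_surjective q
    obtain ⟨K, hKc, hKn⟩ := exists_compact_mem_nhds g
    exact ⟨K, hKc, hg ▸ QuotientGroup.isOpenMap_coe.image_mem_nhds hKn⟩
  choose Ks hKc hKn using hsel
  obtain ⟨t, -, ht⟩ := hQ.elim_nhds_subcover (fun q => QuotientGroup.mk '' Ks q)
    (fun q _ => hKn q)
  refine ⟨⋃ q ∈ t, Ks q, t.finite_toSet.isCompact_biUnion (fun q _ => hKc q), ?_⟩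
  intro a ha
  obtain ⟨q, hqt, hq⟩ := Set.mem_iUnion₂.mp (ht ha)
  obtain ⟨g, hg, hgq⟩ := hq
  exact ⟨g, Set.mem_biUnion hqt hg, hgq⟩


/-- Uniform coset bound along the orbit of `x`. -/
lemma orbit_coset {T : X ≃ₜ X} {f : X → G} {H : X → Subgroup G}
    (hH : IsConsistentSelection T f H) {x : X} {K : Set G}
    (hK : ∀ j : ℤ, cocycle T f j x ∈ K * (H x : Set G)) (m n : ℤ) :
    cocycle T f n ((T.toEquiv ^ m) x) ∈ (K * K⁻¹) * (H ((T.toEquiv ^ m) x) : Set G) := by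
  obtain ⟨k, hk, h, hh, hkh0⟩ := hK (n + m)
  obtain ⟨k', hk', h', hh', hkh0'⟩ := hK m
  have hkh : k * h = cocycle T f (n + m) x := hkh0
  have hkh' : k' * h' = cocycle T f m x := hkh0'
  have hco : cocycle T f n ((T.toEquiv ^ m) x) * cocycle T f m x = cocycle T f (n + m) x :=
    (cocycle_add T f n m x).symm
  have hmem : h'⁻¹ * h ∈ (H x : Set G) := by
    have hh2 : h ∈ H x := hh
    have hh2' : h' ∈ H x := hh'
    exact mul_mem (inv_mem hh2') hh2
  have hc2 : cocycle T f m x * (h'⁻¹ * h) * (cocycle T f m x)⁻¹ ∈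
      (H ((T.toEquiv ^ m) x) : Set G) := by
    rw [hH.conj x m]
    exact ⟨h'⁻¹ * h, hmem, rfl⟩
  refine ⟨k * k'⁻¹, Set.mul_mem_mul hk (Set.inv_mem_inv.mpr hk'),
    cocycle T f m x * (h'⁻¹ * h) * (cocycle T f m x)⁻¹, hc2, ?_⟩
  have h1 : cocycle T f n ((T.toEquiv ^ m) x) = (k * h) * (k' * h')⁻¹ := by
    rw [hkh, hkh', ← hco, mul_inv_cancel_right]
  show (k * k'⁻¹) * (cocycle T f m x * (h'⁻¹ * h) * (cocycle T f m x)⁻¹) =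
    cocycle T f n ((T.toEquiv ^ m) x)
  rw [← hkh', h1]
  group

/-- Passing the coset bound to limits of the dense orbit via Fell continuity. -/
lemma limit_coset [IsTopologicalGroup G] [LocallyCompactSpace G]
    {T : X ≃ₜ X} {f : X → G} (hf : Continuous f) {H : X → Subgroup G}
    (hH : IsConsistentSelection T f H) {K' : Set G} (hK' : IsCompact K') {S : Set X}
    (hS : ∀ z ∈ S, ∀ n : ℤ, cocycle T f n z ∈ K' * (H z : Set G))
    {y : X} (hy : y ∈ closure S) (n : ℤ) :
    cocycle T f n y ∈ K' * (H y : Set G) := by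
  have hne : (𝓝[S] y).NeBot := mem_closure_iff_nhdsWithin_neBot.mp hy
  have hsel : ∀ z : X, ∃ c : G, z ∈ S →
      c ∈ K' ∧ c⁻¹ * cocycle T f n z ∈ (H z : Set G) := by
    intro z
    by_cases hz : z ∈ S
    · obtain ⟨c, hc, h, hh, he⟩ := hS z hz n
      exact ⟨c, fun _ => ⟨hc, by rw [← he, inv_mul_cancel_left]; exact hh⟩⟩
    · exact ⟨1, fun h => absurd h hz⟩
  choose φ hφ using hsel
  have hmap : map φ (𝓝[S] y) ≤ 𝓟 K' := by
    rw [le_principal_iff, mem_map]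
    filter_upwards [self_mem_nhdsWithin] with z hz
    exact (hφ z hz).1
  obtain ⟨c, hcK, hclus⟩ := hK'.exists_clusterPt hmap
  have hmb : NeBot (map φ (𝓝[S] y) ⊓ 𝓝 c) := by
    rw [inf_comm]; exact hclus
  have hm : NeBot (𝓝[S] y ⊓ comap φ (𝓝 c)) := Filter.neBot_inf_comap_iff_map.mpr hmb
  set m := 𝓝[S] y ⊓ comap φ (𝓝 c) with hmdef
  have hid : Tendsto (fun z : X => z) m (𝓝 y) :=
    (tendsto_id.mono_left inf_le_left).mono_right nhdsWithin_le_nhds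
  have hφc : Tendsto φ m (𝓝 c) := tendsto_comap.mono_left inf_le_right
  have hcoc : Tendsto (fun z => cocycle T f n z) m (𝓝 (cocycle T f n y)) :=
    ((continuous_cocycle T hf n).tendsto y).comp hid
  have hten : Tendsto (fun z => (φ z)⁻¹ * cocycle T f n z) m (𝓝 (c⁻¹ * cocycle T f n y)) :=
    hφc.inv.mul hcoc
  set q := c⁻¹ * cocycle T f n y with hqdef
  have hq : q ∈ (H y : Set G) := by
    by_contra hq
    obtain ⟨K₀, hK₀n, hK₀sub, hK₀c⟩ :=
      local_compact_nhds (((hH.isClosed y).isOpen_compl).mem_nhds hq)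
    have hdisj : K₀ ∩ (H y : Set G) = ∅ := by
      rw [Set.eq_empty_iff_forall_notMem]
      rintro g ⟨hg1, hg2⟩
      exact hK₀sub hg1 hg2
    obtain ⟨W, hW, hWall⟩ := hH.fell_compact y K₀ hK₀c hdisj
    have h1 : ∀ᶠ z in m, z ∈ S := mem_inf_of_left self_mem_nhdsWithin
    have h2 : ∀ᶠ z in m, z ∈ W := mem_inf_of_left (nhdsWithin_le_nhds hW)
    have h3 : ∀ᶠ z in m, (φ z)⁻¹ * cocycle T f n z ∈ K₀ := hten.eventually_mem hK₀n
    obtain ⟨z, hz1, hz2, hz3⟩ := (h1.and (h2.and h3)).exists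
    have : (φ z)⁻¹ * cocycle T f n z ∈ K₀ ∩ (H z : Set G) :=
      ⟨hz3, (hφ z hz1).2⟩
    rw [hWall z hz2] at this
    exact this
  refine ⟨c, hcK, q, hq, ?_⟩
  show c * q = cocycle T f n y
  rw [hqdef, mul_inv_cancel_left]

end Helpers

end Defs

theorem statement_14
    {X : Type*} [TopologicalSpace X] [CompactSpace X] [TopologicalSpace.MetrizableSpace X]
    {G : Type*} [TopologicalSpace G] [Group G] [IsTopologicalGroup G]
    [LocallyCompactSpace G] [SecondCountableTopology G] [T2Space G]
    (T : X ≃ₜ X) (hT : IsMinimal T) (f : X → G) (hf : Continuous f)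
    (H : X → Subgroup G) (hH : IsConsistentSelection T f H) (x : X)
    (hx : IsCompact (closure
      (Set.range fun n : ℤ => skewPowQ T f (H x) n (x, (QuotientGroup.mk 1 : G ⧸ H x))))) :
    ∀ y : X, IsCompact (closure
      (Set.range fun n : ℤ => skewPowQ T f (H y) n (y, (QuotientGroup.mk 1 : G ⧸ H y)))) := by
  intro y
  have hQ : IsCompact (Prod.snd '' closure
      (Set.range fun n : ℤ => skewPowQ T f (H x) n (x, (QuotientGroup.mk 1 : G ⧸ H x)))) :=
    hx.image continuous_snd
  obtain ⟨K, hKc, hKsub⟩ := exists_compact_lift (H x) hQ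
  have hKx : ∀ j : ℤ, cocycle T f j x ∈ K * (H x : Set G) := by
    intro j
    have hpt : skewPowQ T f (H x) j (x, (QuotientGroup.mk 1 : G ⧸ H x)) ∈ closure
        (Set.range fun n : ℤ => skewPowQ T f (H x) n (x, (QuotientGroup.mk 1 : G ⧸ H x))) :=
      subset_closure ⟨j, rfl⟩
    have hsnd : (QuotientGroup.mk (cocycle T f j x) : G ⧸ H x) ∈ Prod.snd '' closure
        (Set.range fun n : ℤ => skewPowQ T f (H x) n (x, (QuotientGroup.mk 1 : G ⧸ H x))) := by
      refine ⟨_, hpt, ?_⟩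
      show cocycle T f j x • (QuotientGroup.mk (1:G) : G ⧸ H x) = _
      rw [MulAction.Quotient.smul_mk, smul_eq_mul, mul_one]
    obtain ⟨k, hkK, hk⟩ := hKsub hsnd
    have hmem : k⁻¹ * cocycle T f j x ∈ H x := QuotientGroup.eq.mp hk
    refine ⟨k, hkK, k⁻¹ * cocycle T f j x, hmem, ?_⟩
    show k * (k⁻¹ * cocycle T f j x) = cocycle T f j x
    rw [mul_inv_cancel_left]
  have hK'c : IsCompact (K * K⁻¹) := hKc.mul hKc.inv
  have hSb : ∀ z ∈ Set.range (fun n : ℤ => (T.toEquiv ^ n) x), ∀ n : ℤ,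
      cocycle T f n z ∈ (K * K⁻¹) * (H z : Set G) := by
    rintro z ⟨m, rfl⟩ n
    exact orbit_coset hH hKx m n
  have hy : ∀ n : ℤ, cocycle T f n y ∈ (K * K⁻¹) * (H y : Set G) :=
    fun n => limit_coset hf hH hK'c hSb (hT x y) n
  have hclosed : IsClosed (QuotientGroup.mk '' (K * K⁻¹) : Set (G ⧸ H y)) := by
    rw [← (QuotientGroup.isQuotientMap_mk (H y)).isClosed_preimage,
      QuotientGroup.preimage_image_mk_eq_mul]
    exact (hH.isClosed y).mul_left_of_isCompact hK'c
  have hcpt : IsCompact ((Set.univ : Set X) ×ˢ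
      (QuotientGroup.mk '' (K * K⁻¹) : Set (G ⧸ H y))) :=
    isCompact_univ.prod (hK'c.image QuotientGroup.continuous_mk)
  refine IsCompact.of_isClosed_subset hcpt isClosed_closure
    (closure_minimal ?_ (isClosed_univ.prod hclosed))
  rintro p ⟨n, rfl⟩
  refine ⟨trivial, ?_⟩
  obtain ⟨c, hc, h, hh, he0⟩ := hy n
  have he : c * h = cocycle T f n y := he0
  show cocycle T f n y • (QuotientGroup.mk (1:G) : G ⧸ H y) ∈ _
  rw [MulAction.Quotient.smul_mk, smul_eq_mul, mul_one, ← he,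
    QuotientGroup.mk_mul_of_mem c hh]
  exact ⟨c, hc, rfl⟩
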